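/- Let G be a symmetric n×n integer matrix with det G ≠ 0, and suppose M ∈ Mₙ(ℤ) has odd determinant and MᵀGM is the block diagonal matrix with diagonal blocks G₁ and 2·G₂, where G₁ is a symmetric n₂×n₂ integer matrix with odd determinant and G₂ is a symmetric (n−n₂)×(n−n₂) integer matrix. Then the number of cosets r + ℤⁿ with r ∈ sh(G) and 2r ∈ ℤⁿ (the elements of order dividing 2 in sh(G)/ℤⁿ) equals 2^{n−n₂}. -/

import Mathlib

open Matrix

/-- The shadow of a nondegenerate integral lattice with Gram matrix `G`:
`sh(G) = {r ∈ ℚⁿ : rᵀGx − xᵀGx/2 ∈ ℤ for all x ∈ ℤⁿ}`. -/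
def latticeShadow {n : ℕ} (G : Matrix (Fin n) (Fin n) ℤ) : Set (Fin n → ℚ) :=
  {r | ∀ x : Fin n → ℤ, ∃ m : ℤ,
    r ⬝ᵥ (G.map (Int.cast : ℤ → ℚ)).mulVec (fun i => (x i : ℚ))
      - ((fun i => (x i : ℚ)) ⬝ᵥ (G.map (Int.cast : ℤ → ℚ)).mulVec (fun i => (x i : ℚ))) / 2
      = (m : ℚ)}

/-- A rational vector is integral if all its coordinates are integers. -/
def IsIntVec {n : ℕ} (v : Fin n → ℚ) : Prop := ∀ i, ∃ m : ℤ, v i = (m : ℚ)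

open BigOperators Finset

lemma quad_diag {N : ℕ} (A : Matrix (Fin N) (Fin N) (ZMod 2)) (hA : A.IsSymm)
    (x : Fin N → ZMod 2) : x ⬝ᵥ A.mulVec x = ∑ i, A i i * x i := by
  have hsq : ∀ a : ZMod 2, a * a = a := by decide
  have hadd : ∀ a : ZMod 2, a + a = 0 := by decide
  have hsymm : ∀ i j, A j i = A i j := fun i j => by rw [← hA.apply i j]
  have h1 : x ⬝ᵥ A.mulVec x = ∑ p ∈ (univ : Finset (Fin N)) ×ˢ univ, x p.1 * A p.1 p.2 * x p.2 := by
    rw [Finset.sum_product]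
    simp [dotProduct, mulVec, dotProduct, Finset.mul_sum, mul_assoc]
  rw [h1, ← Finset.diag_union_offDiag (univ : Finset (Fin N)),
    Finset.sum_union (Finset.disjoint_diag_offDiag _)]
  have h2 : ∑ p ∈ (univ : Finset (Fin N)).offDiag, x p.1 * A p.1 p.2 * x p.2 = 0 := by
    refine Finset.sum_involution (fun p _ => (p.2, p.1)) ?_ ?_ ?_ ?_
    · intro p hp
      show x p.1 * A p.1 p.2 * x p.2 + x p.2 * A p.2 p.1 * x p.1 = 0
      rw [hsymm p.1 p.2, show x p.1 * A p.1 p.2 * x p.2 + x p.2 * A p.1 p.2 * x p.1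
        = (x p.1 * A p.1 p.2 * x p.2) + (x p.1 * A p.1 p.2 * x p.2) by ring, hadd]
    · intro p hp h
      simp only [Finset.mem_offDiag, Finset.mem_univ, true_and] at hp
      intro hc
      exact hp (congrArg Prod.snd hc)
    · intro p hp
      simp only [Finset.mem_offDiag, Finset.mem_univ, true_and] at hp ⊢
      exact fun h => hp h.symm
    · intro p hp; rfl
  rw [h2, add_zero, Finset.sum_diag]
  refine Finset.sum_congr rfl fun i _ => ?_
  rw [show x i * A i i * x i = A i i * (x i * x i) by ring, hsq]

lemma cast_dot_mulVec {S : Type*} [CommRing S] (f : ℤ →+* S) {N : ℕ}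
    (G : Matrix (Fin N) (Fin N) ℤ) (v x : Fin N → ℤ) :
    f (v ⬝ᵥ G.mulVec x) = (f ∘ v) ⬝ᵥ (G.map f).mulVec (f ∘ x) := by
  rw [RingHom.map_dotProduct]
  congr 1
  funext i
  exact RingHom.map_mulVec f G x i

lemma vecMul_symm {S : Type*} [CommRing S] {N : ℕ} (A : Matrix (Fin N) (Fin N) S)
    (hA : A.IsSymm) (v : Fin N → S) : v ᵥ* A = A *ᵥ v := by
  conv_lhs => rw [← hA]
  exact Matrix.vecMul_transpose A v

lemma isSymm_map {N : ℕ} (G : Matrix (Fin N) (Fin N) ℤ) (hG : G.IsSymm) :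
    (G.map (Int.cast : ℤ → ZMod 2)).IsSymm := by
  unfold Matrix.IsSymm
  rw [← Matrix.transpose_map, hG]

lemma shadow_iff {n : ℕ} (G : Matrix (Fin n) (Fin n) ℤ) (hG : G.IsSymm) (v : Fin n → ℤ) :
    (fun i => (v i : ℚ)/2) ∈ latticeShadow G ↔
    (G.map (Int.cast : ℤ → ZMod 2)).mulVec (fun i => (v i : ZMod 2))
      = fun i => ((G i i : ℤ) : ZMod 2) := by
  constructor
  · intro h
    funext i
    obtain ⟨m, hm⟩ := h (Pi.single i 1)
    have hx : (fun j => ((Pi.single i 1 : Fin n → ℤ) j : ℚ)) = Pi.single i (1:ℚ) := by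
      funext j
      by_cases hj : j = i
      · subst hj; simp
      · simp [Pi.single_apply, hj]
    rw [hx] at hm
    rw [Matrix.mulVec_single] at hm
    have hm1 : (∑ j, (v j : ℚ)/2 * (G j i : ℚ)) - (G i i : ℚ)/2 = (m:ℚ) := by
      have h2 : Pi.single i (1:ℚ) ⬝ᵥ (fun k => (G.map (Int.cast : ℤ → ℚ)) k i * 1)
          = (G i i : ℚ) := by
        rw [single_dotProduct]
        simp
      rw [← hm]
      congr 1
      · simp [dotProduct, Matrix.map_apply]
      · exact (congrArg (· / 2) h2).symm
    have hint : (∑ j, v j * G j i) - G i i = 2 * m := by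
      have hsum : ∑ j, (v j:ℚ)/2 * (G j i:ℚ) = (∑ j, (v j:ℚ) * (G j i:ℚ))/2 := by
        rw [Finset.sum_div]
        exact Finset.sum_congr rfl fun j _ => by ring
      rw [hsum] at hm1
      have h3 : ((∑ j, v j * G j i : ℤ) : ℚ) - ((G i i : ℤ) : ℚ) = ((2 * m : ℤ) : ℚ) := by
        push_cast
        linear_combination 2 * hm1
      exact_mod_cast h3
    have hz : ((∑ j, v j * G j i : ℤ) : ZMod 2) = ((G i i : ℤ) : ZMod 2) := by
      have h4 : ((∑ j, v j * G j i : ℤ) : ZMod 2) - ((G i i : ℤ) : ZMod 2) = 0 := by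
        rw [← Int.cast_sub, hint, Int.cast_mul]
        have : ((2:ℤ) : ZMod 2) = 0 := by decide
        rw [this, zero_mul]
      exact sub_eq_zero.mp h4
    calc (G.map (Int.cast : ℤ → ZMod 2)).mulVec (fun j => (v j : ZMod 2)) i
        = ∑ j, ((G i j : ℤ) : ZMod 2) * (v j : ZMod 2) := by
          simp [Matrix.mulVec, dotProduct, Matrix.map_apply]
      _ = ((∑ j, v j * G j i : ℤ) : ZMod 2) := by
          push_cast
          exact Finset.sum_congr rfl fun j _ => by rw [← hG.apply i j]; ring
      _ = ((G i i : ℤ) : ZMod 2) := hz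
  · intro hcong x
    have hAsymm : (G.map (Int.cast : ℤ → ZMod 2)).IsSymm := isSymm_map G hG
    set f2 : ℤ →+* ZMod 2 := Int.castRingHom (ZMod 2)
    have key : ((v ⬝ᵥ G.mulVec x - x ⬝ᵥ G.mulVec x : ℤ) : ZMod 2) = 0 := by
      rw [Int.cast_sub]
      have c1 : ((v ⬝ᵥ G.mulVec x : ℤ) : ZMod 2)
          = (f2 ∘ v) ⬝ᵥ (G.map (Int.cast : ℤ → ZMod 2)).mulVec (f2 ∘ x) :=
        cast_dot_mulVec f2 G v x
      have c2 : ((x ⬝ᵥ G.mulVec x : ℤ) : ZMod 2)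
          = (f2 ∘ x) ⬝ᵥ (G.map (Int.cast : ℤ → ZMod 2)).mulVec (f2 ∘ x) :=
        cast_dot_mulVec f2 G x x
      have hfv : (⇑f2 ∘ v) = (fun i => ((v i : ℤ) : ZMod 2)) := rfl
      rw [c1, c2, Matrix.dotProduct_mulVec, vecMul_symm _ hAsymm, hfv, hcong,
        quad_diag _ hAsymm]
      have : (fun i => ((G i i : ℤ) : ZMod 2)) ⬝ᵥ (f2 ∘ x)
          = ∑ i, (G.map (Int.cast : ℤ → ZMod 2)) i i * (f2 ∘ x) i := by
        simp [dotProduct, Matrix.map_apply]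
      rw [this, sub_self]
    obtain ⟨k, hk⟩ := (ZMod.intCast_zmod_eq_zero_iff_dvd _ 2).mp key
    refine ⟨k, ?_⟩
    have e1 : (fun i => (v i:ℚ)/2) ⬝ᵥ (G.map (Int.cast : ℤ → ℚ)).mulVec (fun i => (x i : ℚ))
        = ((v ⬝ᵥ G.mulVec x : ℤ) : ℚ)/2 := by
      rw [show ((v ⬝ᵥ G.mulVec x : ℤ) : ℚ)
        = ((Int.castRingHom ℚ) ∘ v) ⬝ᵥ (G.map (Int.cast : ℤ → ℚ)).mulVec ((Int.castRingHom ℚ) ∘ x)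
        from cast_dot_mulVec (Int.castRingHom ℚ) G v x,
        show (⇑(Int.castRingHom ℚ) ∘ x) = (fun i => ((x i : ℤ) : ℚ)) from rfl,
        show (⇑(Int.castRingHom ℚ) ∘ v) = (fun i => ((v i : ℤ) : ℚ)) from rfl]
      simp only [dotProduct, Function.comp, Int.coe_castRingHom, Finset.sum_div]
      exact Finset.sum_congr rfl fun i _ => by ring
    have e2 : (fun i => ((x i : ℤ):ℚ)) ⬝ᵥ (G.map (Int.cast : ℤ → ℚ)).mulVec (fun i => (x i : ℚ))
        = ((x ⬝ᵥ G.mulVec x : ℤ) : ℚ) := by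
      rw [show ((x ⬝ᵥ G.mulVec x : ℤ) : ℚ)
        = ((Int.castRingHom ℚ) ∘ x) ⬝ᵥ (G.map (Int.cast : ℤ → ℚ)).mulVec ((Int.castRingHom ℚ) ∘ x)
        from cast_dot_mulVec (Int.castRingHom ℚ) G x x,
        show (⇑(Int.castRingHom ℚ) ∘ x) = (fun i => ((x i : ℤ) : ℚ)) from rfl]
    rw [e1, e2]
    have : ((v ⬝ᵥ G.mulVec x : ℤ) : ℚ) - ((x ⬝ᵥ G.mulVec x : ℤ) : ℚ) = 2 * (k : ℚ) := by
      rw [← Int.cast_sub, hk]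
      push_cast; ring
    linarith [this]

lemma card_sol {n n₂ m : ℕ} (A : Matrix (Fin n) (Fin n) (ZMod 2)) (hA : A.IsSymm)
    (M' : Matrix (Fin n) (Fin n) (ZMod 2)) (hM' : IsUnit M'.det)
    (G₁' : Matrix (Fin n₂) (Fin n₂) (ZMod 2)) (hG₁' : IsUnit G₁'.det)
    (e : Fin n ≃ (Fin n₂ ⊕ Fin m))
    (hb : M'ᵀ * A * M' = (fromBlocks G₁' 0 0 0).submatrix e e) :
    Fintype.card {w : Fin n → ZMod 2 // A.mulVec w = fun i => A i i} = 2 ^ m := by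
  classical
  set B : Matrix (Fin n) (Fin n) (ZMod 2) := M'ᵀ * A * M' with hB
  have hMT : IsUnit M'ᵀ.det := by rwa [Matrix.det_transpose]
  have h1 : M'⁻¹ * M' = 1 := Matrix.nonsing_inv_mul M' hM'
  have h2 : M' * M'⁻¹ = 1 := Matrix.mul_nonsing_inv M' hM'
  let eM : (Fin n → ZMod 2) ≃ (Fin n → ZMod 2) :=
    ⟨fun t => M'.mulVec t, fun w => M'⁻¹.mulVec w,
     fun t => by simp [Matrix.mulVec_mulVec, h1, Matrix.one_mulVec],
     fun w => by simp [Matrix.mulVec_mulVec, h2, Matrix.one_mulVec]⟩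
  have hBsymm : B.IsSymm := by
    unfold Matrix.IsSymm
    rw [hB, Matrix.transpose_mul, Matrix.transpose_mul, Matrix.transpose_transpose, hA,
      Matrix.mul_assoc]
  have hdiag : M'ᵀ.mulVec (fun i => A i i) = fun i => B i i := by
    funext i
    have hBi : B i i = (fun k => M' k i) ⬝ᵥ A.mulVec (fun k => M' k i) := by
      rw [hB]
      simp only [Matrix.mul_apply, Matrix.mulVec, dotProduct, Matrix.transpose_apply,
        Finset.sum_mul, Finset.mul_sum]
      rw [Finset.sum_comm]
      exact Finset.sum_congr rfl fun k _ => Finset.sum_congr rfl fun l _ => by ring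
    rw [hBi, quad_diag A hA]
    simp only [Matrix.mulVec, dotProduct, Matrix.transpose_apply]
    exact Finset.sum_congr rfl fun k _ => by ring
  have key : ∀ t, M'ᵀ.mulVec (A.mulVec (eM t)) = B.mulVec t := by
    intro t
    show M'ᵀ.mulVec (A.mulVec (M'.mulVec t)) = _
    rw [Matrix.mulVec_mulVec, Matrix.mulVec_mulVec]
  have hcond : ∀ t, (A.mulVec (eM t) = fun i => A i i) ↔ (B.mulVec t = fun i => B i i) := by
    intro t
    constructor
    · intro h
      rw [← key t, h]
      exact hdiag
    · intro h
      have hc : M'ᵀ.mulVec (A.mulVec (eM t)) = M'ᵀ.mulVec (fun i => A i i) := by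
        rw [key t, h, hdiag]
      have h2 := congrArg (fun z => (M'ᵀ)⁻¹.mulVec z) hc
      simpa [Matrix.mulVec_mulVec, ← Matrix.mul_assoc, Matrix.nonsing_inv_mul _ hMT,
        Matrix.one_mulVec, Matrix.one_mul] using h2
  let F : Matrix (Fin n₂ ⊕ Fin m) (Fin n₂ ⊕ Fin m) (ZMod 2) := fromBlocks G₁' 0 0 0
  let E1 : {t : Fin n → ZMod 2 // B.mulVec t = fun i => B i i}
      ≃ {w : Fin n → ZMod 2 // A.mulVec w = fun i => A i i} :=
    Equiv.subtypeEquiv eM (fun t => (hcond t).symm)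
  have hFdiag : (fun j => F j j) = Sum.elim (fun i => G₁' i i) (fun _ => (0 : ZMod 2)) := by
    funext j
    cases j with
    | inl i => rfl
    | inr j => rfl
  have hcond2 : ∀ t : Fin n → ZMod 2,
      (B.mulVec t = fun i => B i i) ↔ (F.mulVec (t ∘ e.symm) = fun j => F j j) := by
    intro t
    rw [hb, Matrix.submatrix_mulVec_equiv]
    constructor
    · intro h
      funext j
      have := congrFun h (e.symm j)
      simpa using this
    · intro h
      funext i
      have := congrFun h (e i)
      simpa using this
  let E2 : {t : Fin n → ZMod 2 // B.mulVec t = fun i => B i i}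
      ≃ {u : Fin n₂ ⊕ Fin m → ZMod 2 // F.mulVec u = fun j => F j j} :=
    Equiv.subtypeEquiv (Equiv.arrowCongr e (Equiv.refl (ZMod 2))) (fun t => by
      exact hcond2 t)
  have hsplit : ∀ u : Fin n₂ ⊕ Fin m → ZMod 2,
      (F.mulVec u = fun j => F j j) ↔ (G₁'.mulVec (u ∘ Sum.inl) = fun i => G₁' i i) := by
    intro u
    have hu : u = Sum.elim (u ∘ Sum.inl) (u ∘ Sum.inr) := by
      funext j; cases j <;> rfl
    rw [hFdiag]
    constructor
    · intro h
      funext i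
      have := congrFun h (Sum.inl i)
      rw [hu, Matrix.fromBlocks_mulVec] at this
      simpa using this
    · intro h
      conv_lhs => rw [hu]
      rw [Matrix.fromBlocks_mulVec]
      funext j
      cases j with
      | inl i =>
        simpa using congrFun h i
      | inr j => simp
  have hG₁inv1 : G₁'⁻¹ * G₁' = 1 := Matrix.nonsing_inv_mul G₁' hG₁'
  have hG₁inv2 : G₁' * G₁'⁻¹ = 1 := Matrix.mul_nonsing_inv G₁' hG₁'
  set u₀ : Fin n₂ → ZMod 2 := G₁'⁻¹.mulVec (fun i => G₁' i i) with hu₀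
  have huniq : ∀ x : Fin n₂ → ZMod 2, (G₁'.mulVec x = fun i => G₁' i i) ↔ x = u₀ := by
    intro x
    constructor
    · intro h
      rw [hu₀, ← h, Matrix.mulVec_mulVec, hG₁inv1, Matrix.one_mulVec]
    · intro h
      rw [h, hu₀, Matrix.mulVec_mulVec, hG₁inv2, Matrix.one_mulVec]
  let E3 : {u : Fin n₂ ⊕ Fin m → ZMod 2 // F.mulVec u = fun j => F j j}
      ≃ {p : (Fin n₂ → ZMod 2) × (Fin m → ZMod 2) // p.1 = u₀} :=
    Equiv.subtypeEquiv (Equiv.sumArrowEquivProdArrow _ _ _) (fun u => by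
      rw [hsplit u, huniq]
      rfl)
  let E4 : {p : (Fin n₂ → ZMod 2) × (Fin m → ZMod 2) // p.1 = u₀} ≃ (Fin m → ZMod 2) :=
    { toFun := fun p => p.1.2
      invFun := fun b => ⟨(u₀, b), rfl⟩
      left_inv := fun p => by
        ext
        · exact p.2.symm ▸ rfl
        · rfl
      right_inv := fun b => rfl }
  have := Fintype.card_congr (E1.symm.trans (E2.trans (E3.trans E4)))
  rw [this]
  simp [ZMod.card]

lemma map_mul_int {a b c : ℕ} (P : Matrix (Fin a) (Fin b) ℤ) (Q : Matrix (Fin b) (Fin c) ℤ) :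
    (P * Q).map (Int.cast : ℤ → ZMod 2) = P.map (Int.cast : ℤ → ZMod 2) * Q.map (Int.cast : ℤ → ZMod 2) := by
  ext i j
  simp [Matrix.mul_apply, Matrix.map_apply]

lemma odd_int_cast_zmod_two {k : ℤ} (hk : Odd k) : ((k : ℤ) : ZMod 2) = 1 := by
  obtain ⟨j, hj⟩ := hk
  rw [hj]
  push_cast
  rw [show ((2 : ZMod 2)) = 0 from by decide]
  ring

/-- If `MᵀGM = G₁ ⊕ 2·G₂` with `M` and `G₁` of odd determinant and
`G₁` of size `n₂`, then the number of cosets `r + ℤⁿ` (`r ∈ sh(G)`, `2r ∈ ℤⁿ`)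
of elements of order dividing 2 in `sh(G)/ℤⁿ` equals `2^(n−n₂)`. -/
theorem card_two_torsion_cosets_of_shadow
    {n : ℕ} (G : Matrix (Fin n) (Fin n) ℤ) (hG : G.IsSymm) (hdet : G.det ≠ 0)
    (n₂ : ℕ) (hn₂ : n₂ ≤ n) (M : Matrix (Fin n) (Fin n) ℤ)
    (G₁ : Matrix (Fin n₂) (Fin n₂) ℤ) (G₂ : Matrix (Fin (n - n₂)) (Fin (n - n₂)) ℤ)
    (e : Fin n ≃ (Fin n₂ ⊕ Fin (n - n₂)))
    (hM : Odd M.det) (hG₁ : G₁.IsSymm) (hG₁det : Odd G₁.det) (hG₂ : G₂.IsSymm)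
    (hblock : Mᵀ * G * M = (Matrix.fromBlocks G₁ 0 0 ((2 : ℤ) • G₂)).submatrix e e)
    (R : Finset (Fin n → ℚ))
    (hR : ∀ r ∈ R, r ∈ latticeShadow G ∧ IsIntVec ((2 : ℚ) • r))
    (hreps : ∀ s ∈ latticeShadow G, IsIntVec ((2 : ℚ) • s) →
      ∃! r, r ∈ R ∧ IsIntVec (s - r)) :
    R.card = 2 ^ (n - n₂) := by
  classical
  set A : Matrix (Fin n) (Fin n) (ZMod 2) := G.map (Int.cast : ℤ → ZMod 2) with hA
  set d : Fin n → ZMod 2 := fun i => ((G i i : ℤ) : ZMod 2) with hd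
  -- numerator extraction
  have hv : ∀ r : Fin n → ℚ, IsIntVec ((2 : ℚ) • r) →
      ∀ i, (((2 * r i).num : ℤ) : ℚ) = 2 * r i := by
    intro r hr i
    obtain ⟨m, hm⟩ := hr i
    have h2 : 2 * r i = (m : ℚ) := by
      simpa [Pi.smul_apply, smul_eq_mul] using hm
    rw [h2, Rat.num_intCast]
  have hrrep : ∀ r : Fin n → ℚ, IsIntVec ((2 : ℚ) • r) →
      r = fun i => (((2 * r i).num : ℤ) : ℚ)/2 := by
    intro r hr
    funext i
    rw [hv r hr i]
    ring
  -- step 1 : R.card = number of solutions mod 2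
  have hcard1 : R.card = Fintype.card {w : Fin n → ZMod 2 // A.mulVec w = d} := by
    rw [Fintype.card_subtype]
    refine Finset.card_bij (fun r _ => fun i => (((2 * r i).num : ℤ) : ZMod 2)) ?_ ?_ ?_
    · -- maps to solutions
      intro r hr
      obtain ⟨hsh, hint⟩ := hR r hr
      rw [Finset.mem_filter]
      refine ⟨Finset.mem_univ _, ?_⟩
      have := (shadow_iff G hG (fun i => (2 * r i).num)).mp (by rw [← hrrep r hint]; exact hsh)
      exact this
    · -- injective
      intro r hr r' hr' hfe
      have hfe' : (fun i => (((2 * r i).num : ℤ) : ZMod 2))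
          = (fun i => (((2 * r' i).num : ℤ) : ZMod 2)) := hfe
      obtain ⟨hsh, hint⟩ := hR r hr
      obtain ⟨hsh', hint'⟩ := hR r' hr'
      have hsub : IsIntVec (r - r') := by
        intro i
        have h0 : (((2 * r i).num - (2 * r' i).num : ℤ) : ZMod 2) = 0 := by
          rw [Int.cast_sub, congrFun hfe' i, sub_self]
        obtain ⟨k, hk⟩ := (ZMod.intCast_zmod_eq_zero_iff_dvd _ 2).mp h0
        refine ⟨k, ?_⟩
        have e1 := hv r hint i
        have e2 := hv r' hint' i
        have h3 : 2 * r i - 2 * r' i = 2 * (k : ℚ) := by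
          have h5 : 2 * r i - 2 * r' i = (((2 * r i).num - (2 * r' i).num : ℤ) : ℚ) := by
            push_cast
            rw [e1, e2]
          rw [h5, hk]; push_cast; ring
        have h4 : (r - r') i = r i - r' i := rfl
        rw [h4]
        linarith [h3]
      obtain ⟨u, _, huniq⟩ := hreps r hsh hint
      have h1 : r = u := huniq r ⟨hr, fun i => ⟨0, by simp⟩⟩
      have h2 : r' = u := huniq r' ⟨hr', hsub⟩
      rw [h1, h2]
    · -- surjective
      intro w hw
      rw [Finset.mem_filter] at hw
      set v : Fin n → ℤ := fun i => ((w i).val : ℤ) with hvdef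
      have hcastv : (fun i => ((v i : ℤ) : ZMod 2)) = w := by
        funext i
        rw [hvdef]
        push_cast
        rw [ZMod.natCast_val, ZMod.cast_id]
      set s : Fin n → ℚ := fun i => ((v i : ℤ) : ℚ)/2 with hs
      have hssh : s ∈ latticeShadow G := by
        rw [hs]
        exact (shadow_iff G hG v).mpr (by rw [hcastv]; exact hw.2)
      have hsint : IsIntVec ((2 : ℚ) • s) := by
        intro i
        refine ⟨v i, ?_⟩
        simp [hs, Pi.smul_apply, smul_eq_mul]
        ring
      obtain ⟨r, ⟨hrR, hrint⟩, _⟩ := hreps s hssh hsint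
      refine ⟨r, hrR, ?_⟩
      funext i
      obtain ⟨k, hk⟩ := hrint i
      have hsi : s i - r i = (k : ℚ) := hk
      have h2r : 2 * r i = ((v i - 2 * k : ℤ) : ℚ) := by
        push_cast
        have : s i = (v i : ℚ)/2 := rfl
        linarith [hsi, this]
      have hnum : (2 * r i).num = v i - 2 * k := by
        rw [h2r, Rat.num_intCast]
      show (((2 * r i).num : ℤ) : ZMod 2) = w i
      have hcc : ((v i - 2 * k : ℤ) : ZMod 2) = ((v i : ℤ) : ZMod 2) := by
        push_cast
        rw [show ((2 : ZMod 2)) = 0 from by decide]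
        ring
      rw [hnum, hcc, ← hcastv]
  -- step 2 : the matrices mod 2
  have hM' : IsUnit (M.map (Int.cast : ℤ → ZMod 2)).det := by
    have h1 : (M.map (Int.cast : ℤ → ZMod 2)).det = ((M.det : ℤ) : ZMod 2) := by
      rw [show M.map (Int.cast : ℤ → ZMod 2)
        = (Int.castRingHom (ZMod 2)).mapMatrix M from rfl, ← RingHom.map_det]
      rfl
    rw [h1, odd_int_cast_zmod_two hM]
    exact isUnit_one
  have hG₁' : IsUnit (G₁.map (Int.cast : ℤ → ZMod 2)).det := by
    have h1 : (G₁.map (Int.cast : ℤ → ZMod 2)).det = ((G₁.det : ℤ) : ZMod 2) := by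
      rw [show G₁.map (Int.cast : ℤ → ZMod 2)
        = (Int.castRingHom (ZMod 2)).mapMatrix G₁ from rfl, ← RingHom.map_det]
      rfl
    rw [h1, odd_int_cast_zmod_two hG₁det]
    exact isUnit_one
  have hAsymm : A.IsSymm := isSymm_map G hG
  have hb2 : (M.map (Int.cast : ℤ → ZMod 2))ᵀ * A * (M.map (Int.cast : ℤ → ZMod 2))
      = (fromBlocks (G₁.map (Int.cast : ℤ → ZMod 2)) 0 0 0).submatrix e e := by
    have h0 : ((2 : ℤ) • G₂).map (Int.cast : ℤ → ZMod 2) = 0 := by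
      ext i j
      simp only [Matrix.map_apply, Matrix.smul_apply, smul_eq_mul, Matrix.zero_apply]
      push_cast
      rw [show ((2 : ZMod 2)) = 0 from by decide]
      ring
    have := congrArg (fun X => X.map (Int.cast : ℤ → ZMod 2)) hblock
    rw [map_mul_int, map_mul_int, Matrix.transpose_map] at this
    rw [hA, this, ← Matrix.submatrix_map, Matrix.fromBlocks_map, h0]
    congr 1
  have hcard2 := card_sol A hAsymm (M.map (Int.cast : ℤ → ZMod 2)) hM'
    (G₁.map (Int.cast : ℤ → ZMod 2)) hG₁' e hb2
  rw [hcard1]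
  rw [show d = fun i => A i i from by funext i; simp [hd, hA, Matrix.map_apply]] at *
  exact hcard2
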